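/- If the arbitrage index of a cycle of length n+1 satisfies I ≤ 1/(r₁^{n+1}·r₂^{n+1}), then for every input δ > 0 the utility of the cyclic transaction is strictly negative: U(δ) < 0. -/

import Mathlib

/-- Constant-product AMM swap: output of swapping input `δ` through a pool with
input-side reserve `a`, output-side reserve `b` and fee parameters `r1, r2`. -/
noncomputable def swap (r1 r2 a b δ : ℝ) : ℝ := r1 * r2 * b * δ / (a + r1 * δ)

/-- Output of feeding an input through a sequence of pools; each pool is a pair
`(input-side reserve, output-side reserve)` along the direction of trade. -/
noncomputable def cyclicOut (r1 r2 : ℝ) : List (ℝ × ℝ) → ℝ → ℝ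
  | [], δ => δ
  | p :: ps, δ => cyclicOut r1 r2 ps (swap r1 r2 p.1 p.2 δ)

/-- Arbitrage index of a cycle of pools: product of output-side reserves divided
by product of input-side reserves. -/
noncomputable def arbIndex (ps : List (ℝ × ℝ)) : ℝ :=
  (ps.map Prod.snd).prod / (ps.map Prod.fst).prod

/-- The reversed cycle: the same pools in opposite order with the roles of the
two reserves of each pool interchanged. -/
def revPools (ps : List (ℝ × ℝ)) : List (ℝ × ℝ) := (ps.map Prod.swap).reverse

/-- The updated pools after executing a cyclic transaction with input `δ`:
each pool's input-side reserve increases by the amount swapped in and its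
output-side reserve decreases by the amount swapped out. -/
noncomputable def execPools (r1 r2 : ℝ) : List (ℝ × ℝ) → ℝ → List (ℝ × ℝ)
  | [], _ => []
  | p :: ps, δ =>
      (p.1 + δ, p.2 - swap r1 r2 p.1 p.2 δ) :: execPools r1 r2 ps (swap r1 r2 p.1 p.2 δ)

/-- if the arbitrage index of a cycle of length n+1 is at most
1/(r1^(n+1) * r2^(n+1)), then every positive input has strictly negative
utility. -/
lemma cyclicOut_bound (r1 r2 : ℝ) (hr1 : 0 < r1) (hr2 : 0 < r2) :
    ∀ ps : List (ℝ × ℝ), (∀ p ∈ ps, 0 < p.1 ∧ 0 < p.2) → ∀ δ : ℝ, 0 < δ →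
      0 < cyclicOut r1 r2 ps δ ∧
      cyclicOut r1 r2 ps δ ≤
        (r1 * r2) ^ ps.length * ((ps.map Prod.snd).prod / (ps.map Prod.fst).prod) * δ := by
  intro ps
  induction ps with
  | nil => intro _ δ hδ; simp [cyclicOut, hδ, le_of_eq]
  | cons p ps ih =>
    intro hpos δ hδ
    obtain ⟨ha, hb⟩ := hpos p (List.mem_cons_self)
    have hpos' : ∀ q ∈ ps, 0 < q.1 ∧ 0 < q.2 := fun q hq => hpos q (List.mem_cons_of_mem _ hq)
    set x := swap r1 r2 p.1 p.2 δ with hx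
    have hxpos : 0 < x := by
      have : 0 < p.1 + r1 * δ := by positivity
      exact div_pos (by positivity) this
    have hxle : x ≤ r1 * r2 * (p.2 / p.1) * δ := by
      rw [hx, swap]
      rw [div_le_iff₀ (by positivity)]
      have h1 : p.1 ≤ p.1 + r1 * δ := by nlinarith
      calc r1 * r2 * p.2 * δ = (r1 * r2 * (p.2 / p.1) * δ) * p.1 := by
            field_simp
            try ring
        _ ≤ (r1 * r2 * (p.2 / p.1) * δ) * (p.1 + r1 * δ) := by
            apply mul_le_mul_of_nonneg_left h1; positivity
    obtain ⟨h1, h2⟩ := ih hpos' x hxpos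
    refine ⟨by simpa [cyclicOut] using h1, ?_⟩
    have hC : 0 ≤ (r1 * r2) ^ ps.length * ((ps.map Prod.snd).prod / (ps.map Prod.fst).prod) := by
      have hsp : 0 < (ps.map Prod.snd).prod :=
        List.prod_pos (by intro y hy; obtain ⟨q, hq, rfl⟩ := List.mem_map.1 hy; exact (hpos' q hq).2)
      have hfp : 0 < (ps.map Prod.fst).prod :=
        List.prod_pos (by intro y hy; obtain ⟨q, hq, rfl⟩ := List.mem_map.1 hy; exact (hpos' q hq).1)
      positivity
    have : cyclicOut r1 r2 ps x ≤
        (r1 * r2) ^ ps.length * ((ps.map Prod.snd).prod / (ps.map Prod.fst).prod) *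
          (r1 * r2 * (p.2 / p.1) * δ) :=
      le_trans h2 (mul_le_mul_of_nonneg_left hxle hC)
    calc cyclicOut r1 r2 (p :: ps) δ = cyclicOut r1 r2 ps x := by simp [cyclicOut, hx]
      _ ≤ _ := this
      _ = (r1 * r2) ^ (p :: ps).length *
            (((p :: ps).map Prod.snd).prod / ((p :: ps).map Prod.fst).prod) * δ := by
          simp [List.length_cons, pow_succ]
          try field_simp
          try ring

theorem low_index_cycle_not_profitable
    (n : ℕ) (ps : List (ℝ × ℝ)) (hlen : ps.length = n + 1)
    (hpos : ∀ p ∈ ps, 0 < p.1 ∧ 0 < p.2)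
    (r1 r2 : ℝ) (hr1 : 0 < r1) (hr1' : r1 ≤ 1) (hr2 : 0 < r2) (hr2' : r2 ≤ 1)
    (hI : arbIndex ps ≤ 1 / (r1 ^ (n + 1) * r2 ^ (n + 1))) :
    ∀ δ : ℝ, 0 < δ → cyclicOut r1 r2 ps δ - δ < 0 := by
  intro δ hδ
  obtain ⟨q, qs, rfl⟩ : ∃ q qs, ps = q :: qs := by
    cases ps with
    | nil => simp at hlen
    | cons q qs => exact ⟨q, qs, rfl⟩
  obtain ⟨ha, hb⟩ := hpos q (List.mem_cons_self)
  have hpos' : ∀ p ∈ qs, 0 < p.1 ∧ 0 < p.2 := fun p hp => hpos p (List.mem_cons_of_mem _ hp)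
  set x := swap r1 r2 q.1 q.2 δ with hx
  have hxpos : 0 < x := div_pos (by positivity) (by positivity)
  have hxlt : x < r1 * r2 * (q.2 / q.1) * δ := by
    rw [hx, swap, div_lt_iff₀ (by positivity)]
    have h1 : q.1 < q.1 + r1 * δ := by nlinarith
    calc r1 * r2 * q.2 * δ = (r1 * r2 * (q.2 / q.1) * δ) * q.1 := by field_simp; try ring
      _ < (r1 * r2 * (q.2 / q.1) * δ) * (q.1 + r1 * δ) := by
          apply mul_lt_mul_of_pos_left h1; positivity
  obtain ⟨h1, h2⟩ := cyclicOut_bound r1 r2 hr1 hr2 qs hpos' x hxpos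
  have hsp : 0 < (qs.map Prod.snd).prod :=
    List.prod_pos (by intro y hy; obtain ⟨p, hp, rfl⟩ := List.mem_map.1 hy; exact (hpos' p hp).2)
  have hfp : 0 < (qs.map Prod.fst).prod :=
    List.prod_pos (by intro y hy; obtain ⟨p, hp, rfl⟩ := List.mem_map.1 hy; exact (hpos' p hp).1)
  have hC : 0 < (r1 * r2) ^ qs.length * ((qs.map Prod.snd).prod / (qs.map Prod.fst).prod) := by
    positivity
  have key : cyclicOut r1 r2 (q :: qs) δ <
      (r1 * r2) ^ (n + 1) * arbIndex (q :: qs) * δ := by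
    have := lt_of_le_of_lt h2 (mul_lt_mul_of_pos_left hxlt hC)
    have hlen' : qs.length = n := by simpa using hlen
    calc cyclicOut r1 r2 (q :: qs) δ = cyclicOut r1 r2 qs x := by simp [cyclicOut, hx]
      _ < _ := this
      _ = (r1 * r2) ^ (n + 1) * arbIndex (q :: qs) * δ := by
          rw [arbIndex]
          simp [← hlen', pow_succ]
          try field_simp
          try ring
  have hfinal : (r1 * r2) ^ (n + 1) * arbIndex (q :: qs) * δ ≤ δ := by
    have hp : (0:ℝ) < (r1 * r2) ^ (n + 1) := by positivity
    have : (r1 * r2) ^ (n + 1) * arbIndex (q :: qs) ≤ 1 := by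
      rw [mul_pow] at hp ⊢
      calc r1 ^ (n + 1) * r2 ^ (n + 1) * arbIndex (q :: qs)
          ≤ r1 ^ (n + 1) * r2 ^ (n + 1) * (1 / (r1 ^ (n + 1) * r2 ^ (n + 1))) := by
            apply mul_le_mul_of_nonneg_left hI (le_of_lt hp)
        _ = 1 := by field_simp
    nlinarith
  linarith
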